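/- In the DAHA H_k (k ≥ 2), for every 1 ≤ a ≤ k the following relation holds: Y_aX_a = q·(X_aY_a + h·∑_{i=1}^{a−1} X_iY_i·T_{(i,a)})·(1 + h·∑_{p=a}^{k−1} T_{(a,p+1)}), where for 1 ≤ c < d ≤ k, T_{(c,d)} denotes the palindromic product T_{d−1}T_{d−2}⋯T_{c+1}T_cT_{c+1}⋯T_{d−2}T_{d−1} (so T_{(c,c+1)} = T_c), and empty sums are 0. -/

import Mathlib

/-!
The double affine Hecke algebra `H_k` of type `GL_k` over `K' = ℚ(h, q)`.
We realize `ℚ(h, q)` as `RatFunc (RatFunc ℚ)`, with `h` the inner variable and `q` the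
outer one.  Generator indices are 0-based: the Lean index `i` of a `T`-generator
(`i : Fin (k-1)`) stands for the paper index `i + 1 ∈ {1, …, k-1}`, and the Lean index `j`
of an `X`- or `Y`-generator (`j : Fin k`) stands for the paper index `j + 1 ∈ {1, …, k}`.
-/

noncomputable section

abbrev K2 : Type := RatFunc (RatFunc ℚ)

/-- The variable `h` of `ℚ(h, q)`. -/
def hvar : K2 := RatFunc.C RatFunc.X

/-- The variable `q` of `ℚ(h, q)`. -/
def qvar : K2 := RatFunc.X

/-- Generators of the DAHA `H_k`. -/
inductive DGen (k : ℕ) : Type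
  | T : Fin (k - 1) → DGen k
  | T' : Fin (k - 1) → DGen k
  | X : Fin k → DGen k
  | X' : Fin k → DGen k
  | Y : Fin k → DGen k
  | Y' : Fin k → DGen k

open FreeAlgebra in
/-- The defining relations of `H_k`. -/
inductive DRel (k : ℕ) : FreeAlgebra K2 (DGen k) → FreeAlgebra K2 (DGen k) → Prop
  | TT' (i : Fin (k - 1)) : DRel k (ι K2 (DGen.T i) * ι K2 (DGen.T' i)) 1
  | T'T (i : Fin (k - 1)) : DRel k (ι K2 (DGen.T' i) * ι K2 (DGen.T i)) 1
  | XX' (i : Fin k) : DRel k (ι K2 (DGen.X i) * ι K2 (DGen.X' i)) 1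
  | X'X (i : Fin k) : DRel k (ι K2 (DGen.X' i) * ι K2 (DGen.X i)) 1
  | YY' (i : Fin k) : DRel k (ι K2 (DGen.Y i) * ι K2 (DGen.Y' i)) 1
  | Y'Y (i : Fin k) : DRel k (ι K2 (DGen.Y' i) * ι K2 (DGen.Y i)) 1
  | TminusT' (i : Fin (k - 1)) :
      DRel k (ι K2 (DGen.T i) - ι K2 (DGen.T' i)) (algebraMap K2 _ hvar)
  | Tcomm (i j : Fin (k - 1)) (hij : (i : ℕ) + 1 < j ∨ (j : ℕ) + 1 < i) :
      DRel k (ι K2 (DGen.T i) * ι K2 (DGen.T j)) (ι K2 (DGen.T j) * ι K2 (DGen.T i))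
  | braid (i j : Fin (k - 1)) (hij : (j : ℕ) = (i : ℕ) + 1) :
      DRel k (ι K2 (DGen.T i) * ι K2 (DGen.T j) * ι K2 (DGen.T i))
        (ι K2 (DGen.T j) * ι K2 (DGen.T i) * ι K2 (DGen.T j))
  | TXT (i : Fin (k - 1)) (a b : Fin k) (ha : (a : ℕ) = (i : ℕ)) (hb : (b : ℕ) = (i : ℕ) + 1) :
      DRel k (ι K2 (DGen.T' i) * ι K2 (DGen.X a) * ι K2 (DGen.T' i)) (ι K2 (DGen.X b))
  | TX (i : Fin (k - 1)) (a : Fin k) (h1 : (a : ℕ) ≠ (i : ℕ)) (h2 : (a : ℕ) ≠ (i : ℕ) + 1) :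
      DRel k (ι K2 (DGen.T i) * ι K2 (DGen.X a)) (ι K2 (DGen.X a) * ι K2 (DGen.T i))
  | XX (a b : Fin k) :
      DRel k (ι K2 (DGen.X a) * ι K2 (DGen.X b)) (ι K2 (DGen.X b) * ι K2 (DGen.X a))
  | TYT (i : Fin (k - 1)) (a b : Fin k) (ha : (a : ℕ) = (i : ℕ)) (hb : (b : ℕ) = (i : ℕ) + 1) :
      DRel k (ι K2 (DGen.T i) * ι K2 (DGen.Y a) * ι K2 (DGen.T i)) (ι K2 (DGen.Y b))
  | TY (i : Fin (k - 1)) (a : Fin k) (h1 : (a : ℕ) ≠ (i : ℕ)) (h2 : (a : ℕ) ≠ (i : ℕ) + 1) :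
      DRel k (ι K2 (DGen.T i) * ι K2 (DGen.Y a)) (ι K2 (DGen.Y a) * ι K2 (DGen.T i))
  | YY (a b : Fin k) :
      DRel k (ι K2 (DGen.Y a) * ι K2 (DGen.Y b)) (ι K2 (DGen.Y b) * ι K2 (DGen.Y a))
  | cross (i : Fin (k - 1)) (a b : Fin k) (hi : (i : ℕ) = 0) (ha : (a : ℕ) = 0)
      (hb : (b : ℕ) = 1) :
      DRel k (ι K2 (DGen.Y a) * ι K2 (DGen.T i) * ι K2 (DGen.X a))
        (ι K2 (DGen.X b) * ι K2 (DGen.Y a) * ι K2 (DGen.T i))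
  | det (a : Fin k) (ha : (a : ℕ) = 0) :
      DRel k (ι K2 (DGen.Y a) * ((List.finRange k).map (fun j => ι K2 (DGen.X j))).prod)
        (algebraMap K2 _ qvar *
          ((List.finRange k).map (fun j => ι K2 (DGen.X j))).prod * ι K2 (DGen.Y a))

/-- The double affine Hecke algebra `H_k`. -/
abbrev Hk (k : ℕ) : Type := RingQuot (DRel k)

/-- The image in `H_k` of a generator. -/
def dgen {k : ℕ} (g : DGen k) : Hk k := RingQuot.mkAlgHom K2 (DRel k) (FreeAlgebra.ι K2 g)

/-- The generator `T_{i+1}` (paper index) of `H_k`, as a total function of `i : ℕ`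
(with junk value `1` out of range). -/
def TgN (k i : ℕ) : Hk k := if h : i < k - 1 then dgen (DGen.T ⟨i, h⟩) else 1

/-- The generator `X_{i+1}` (paper index) of `H_k`. -/
def XgN (k i : ℕ) : Hk k := if h : i < k then dgen (DGen.X ⟨i, h⟩) else 1

/-- The generator `Y_{i+1}` (paper index) of `H_k`. -/
def YgN (k i : ℕ) : Hk k := if h : i < k then dgen (DGen.Y ⟨i, h⟩) else 1

/-- The list `[hi, hi-1, …, lo, lo+1, …, hi]` of 0-based indices of the palindromic product
`T_{(c,d)} = T_{d−1}⋯T_{c+1}T_cT_{c+1}⋯T_{d−1}` (paper indices `c = lo + 1`, `d = hi + 2`). -/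
def palList (lo hi : ℕ) : List ℕ :=
  (List.range' lo (hi + 1 - lo)).reverse ++ List.range' (lo + 1) (hi - lo)

/-- The palindromic product `T_{(lo+1, hi+2)}` in `H_k` (0-based indices `lo ≤ hi`). -/
def palT (k lo hi : ℕ) : Hk k := ((palList lo hi).map (TgN k)).prod

namespace DahaProof
open FreeAlgebra

/-- primed generators -/
def TpN (k i : ℕ) : Hk k := if h : i < k - 1 then dgen (DGen.T' ⟨i, h⟩) else 1
def XpN (k i : ℕ) : Hk k := if h : i < k then dgen (DGen.X' ⟨i, h⟩) else 1

variable {M : Type*} [Monoid M]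

lemma swA {a b : M} (h : a * b = b * a) (z : M) : a * (b * z) = b * (a * z) := by
  rw [← mul_assoc, h, mul_assoc]

lemma triA {a b : M} (h : a * b * a = b * a * b) (z : M) :
    a * (b * (a * z)) = b * (a * (b * z)) := by
  rw [← mul_assoc, ← mul_assoc, h, mul_assoc, mul_assoc]

def incF (f : ℕ → M) (lo n : ℕ) : M := ((List.range' lo n).map f).prod
def decF (f : ℕ → M) (lo n : ℕ) : M := (((List.range' lo n).reverse).map f).prod
def palF (f : ℕ → M) (lo hi : ℕ) : M := ((palList lo hi).map f).prod

@[simp] lemma incF_zero (f : ℕ → M) (lo : ℕ) : incF f lo 0 = 1 := rfl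
@[simp] lemma decF_zero (f : ℕ → M) (lo : ℕ) : decF f lo 0 = 1 := rfl

lemma incF_succ_right (f : ℕ → M) (lo n : ℕ) :
    incF f lo (n+1) = incF f lo n * f (lo + n) := by
  simp [incF, List.range'_concat]

lemma incF_succ_left (f : ℕ → M) (lo n : ℕ) :
    incF f lo (n+1) = f lo * incF f (lo+1) n := by
  simp [incF, List.range'_succ]

lemma decF_succ_left (f : ℕ → M) (lo n : ℕ) :
    decF f lo (n+1) = f (lo + n) * decF f lo n := by
  simp [decF, List.range'_concat]

lemma decF_succ_right (f : ℕ → M) (lo n : ℕ) :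
    decF f lo (n+1) = decF f (lo+1) n * f lo := by
  simp [decF, List.range'_succ]

lemma decF_mul_incF (f g : ℕ → M) (lo n : ℕ)
    (h : ∀ i, lo ≤ i → i < lo + n → g i * f i = 1) :
    decF g lo n * incF f lo n = 1 := by
  induction n with
  | zero => simp
  | succ n ih =>
    rw [decF_succ_left, incF_succ_right, mul_assoc, ← mul_assoc (decF g lo n),
      ih (fun i h1 h2 => h i h1 (by omega)), one_mul, h _ (by omega) (by omega)]

lemma incF_mul_decF (f g : ℕ → M) (lo n : ℕ)
    (h : ∀ i, lo ≤ i → i < lo + n → f i * g i = 1) :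
    incF f lo n * decF g lo n = 1 := by
  induction n with
  | zero => simp
  | succ n ih =>
    rw [incF_succ_right, decF_succ_left, mul_assoc, ← mul_assoc (f (lo+n)),
      h _ (by omega) (by omega), one_mul, ih (fun i h1 h2 => h i h1 (by omega))]

lemma commute_map_prod (f : ℕ → M) (x : M) (l : List ℕ)
    (h : ∀ i ∈ l, x * f i = f i * x) : x * (l.map f).prod = (l.map f).prod * x := by
  have : Commute x (l.map f).prod := by
    apply Commute.list_prod_right
    intro y hy
    obtain ⟨i, hi, rfl⟩ := List.mem_map.mp hy
    exact h i hi
  exact this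

lemma commute_incF (f : ℕ → M) (x : M) (lo n : ℕ)
    (h : ∀ i, lo ≤ i → i < lo + n → x * f i = f i * x) :
    x * incF f lo n = incF f lo n * x := by
  apply commute_map_prod
  intro i hi
  have := List.mem_range'_1.mp hi
  exact h i this.1 this.2

lemma commute_decF (f : ℕ → M) (x : M) (lo n : ℕ)
    (h : ∀ i, lo ≤ i → i < lo + n → x * f i = f i * x) :
    x * decF f lo n = decF f lo n * x := by
  apply commute_map_prod
  intro i hi
  rw [List.mem_reverse] at hi
  have := List.mem_range'_1.mp hi
  exact h i this.1 this.2

lemma commute_palF (f : ℕ → M) (x : M) (lo hi : ℕ)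
    (h : ∀ i, lo ≤ i → i ≤ hi → x * f i = f i * x) :
    x * palF f lo hi = palF f lo hi * x := by
  apply commute_map_prod
  intro i hi'
  simp only [palList, List.mem_append, List.mem_reverse, List.mem_range'_1] at hi'
  rcases hi' with h' | h' <;> exact h i (by omega) (by omega)

lemma palF_eq (f : ℕ → M) (lo hi : ℕ) :
    palF f lo hi = decF f lo (hi + 1 - lo) * incF f (lo+1) (hi - lo) := by
  simp [palF, palList, decF, incF]

@[simp] lemma palF_base (f : ℕ → M) (lo : ℕ) : palF f lo lo = f lo := by
  simp [palF, palList, Nat.succ_sub (le_refl lo)]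

lemma palF_rec (f : ℕ → M) (lo hi : ℕ) (h : lo ≤ hi) :
    palF f lo (hi+1) = f (hi+1) * palF f lo hi * f (hi+1) := by
  rw [palF_eq, palF_eq,
    show hi + 1 + 1 - lo = (hi + 1 - lo) + 1 by omega,
    show hi + 1 - lo = (hi - lo) + 1 by omega,
    decF_succ_left, decF_succ_left, incF_succ_right,
    show lo + (hi - lo + 1) = hi + 1 by omega,
    show lo + (hi - lo) = hi by omega,
    show lo + 1 + (hi - lo) = hi + 1 by omega]
  simp only [mul_assoc]

lemma mats (f : ℕ → M) (lo n : ℕ)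
    (hb : ∀ i, lo ≤ i → i + 1 ≤ lo + n → f i * f (i+1) * f i = f (i+1) * f i * f (i+1))
    (hc : ∀ i j, lo ≤ i → i + 1 < j → j ≤ lo + n → f i * f j = f j * f i) :
    decF f lo (n+1) * incF f (lo+1) n = incF f lo (n+1) * decF f lo n := by
  induction n with
  | zero => simp [incF_succ_right, decF_succ_left]
  | succ n ih =>
    have ih' := ih (fun i h1 h2 => hb i h1 (by omega))
      (fun i j h1 h2 h3 => hc i j h1 h2 (by omega))
    have hci : f (lo+(n+1)) * incF f lo n = incF f lo n * f (lo+(n+1)) :=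
      commute_incF f _ lo n (fun i h1 h2 => (hc i (lo+(n+1)) h1 (by omega) (by omega)).symm)
    have hcd : f (lo+(n+1)) * decF f lo n = decF f lo n * f (lo+(n+1)) :=
      commute_decF f _ lo n (fun i h1 h2 => (hc i (lo+(n+1)) h1 (by omega) (by omega)).symm)
    have hbr := hb (lo+n) (by omega) (by omega)
    rw [show lo + n + 1 = lo + (n+1) by omega] at hbr
    rw [decF_succ_left, incF_succ_right, show lo + 1 + n = lo + (n+1) by omega,
      show f (lo+(n+1)) * decF f lo (n+1) * (incF f (lo+1) n * f (lo+(n+1)))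
        = f (lo+(n+1)) * (decF f lo (n+1) * incF f (lo+1) n) * f (lo+(n+1)) from by
          simp only [mul_assoc],
      ih', incF_succ_right f lo n, decF_succ_left f lo n]
    simp only [mul_assoc]
    rw [swA hci, ← hcd, ← triA hbr, incF_succ_right f lo (n+1), incF_succ_right f lo n]
    simp only [mul_assoc]

lemma rev_eq_pal (f : ℕ → M) (lo n : ℕ)
    (hb : ∀ i, lo ≤ i → i + 1 ≤ lo + n → f i * f (i+1) * f i = f (i+1) * f i * f (i+1))
    (hc : ∀ i j, lo ≤ i → i + 1 < j → j ≤ lo + n → f i * f j = f j * f i) :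
    incF f lo (n+1) * decF f lo n = palF f lo (lo + n) := by
  rw [palF_eq, show lo + n + 1 - lo = n + 1 by omega, show lo + n - lo = n by omega,
    mats f lo n hb hc]
section
variable {k : ℕ}

local notation "T" => TgN k
local notation "T'" => TpN k
local notation "X" => XgN k
local notation "X'" => XpN k
local notation "Y" => YgN k
local notation "hh" => algebraMap K2 (Hk k) hvar
local notation "qq" => algebraMap K2 (Hk k) qvar

private lemma mk_rel {x y : FreeAlgebra K2 (DGen k)} (h : DRel k x y) :
    RingQuot.mkAlgHom K2 (DRel k) x = RingQuot.mkAlgHom K2 (DRel k) y :=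
  RingQuot.mkAlgHom_rel _ h

lemma T_mul_Tp (i : ℕ) : T i * T' i = 1 := by
  unfold TgN TpN
  by_cases h : i < k - 1
  · rw [dif_pos h, dif_pos h]
    simpa only [dgen, map_mul, map_one] using mk_rel (k := k) (DRel.TT' ⟨i, h⟩)
  · rw [dif_neg h, dif_neg h, one_mul]

lemma Tp_mul_T (i : ℕ) : T' i * T i = 1 := by
  unfold TgN TpN
  by_cases h : i < k - 1
  · rw [dif_pos h, dif_pos h]
    simpa only [dgen, map_mul, map_one] using mk_rel (k := k) (DRel.T'T ⟨i, h⟩)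
  · rw [dif_neg h, dif_neg h, one_mul]

lemma X_mul_Xp (i : ℕ) : X i * X' i = 1 := by
  unfold XgN XpN
  by_cases h : i < k
  · rw [dif_pos h, dif_pos h]
    simpa only [dgen, map_mul, map_one] using mk_rel (k := k) (DRel.XX' ⟨i, h⟩)
  · rw [dif_neg h, dif_neg h, one_mul]

lemma Xp_mul_X (i : ℕ) : X' i * X i = 1 := by
  unfold XgN XpN
  by_cases h : i < k
  · rw [dif_pos h, dif_pos h]
    simpa only [dgen, map_mul, map_one] using mk_rel (k := k) (DRel.X'X ⟨i, h⟩)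
  · rw [dif_neg h, dif_neg h, one_mul]

lemma Tp_eq (i : ℕ) (h : i < k - 1) : T' i = T i - hh := by
  have := mk_rel (k := k) (DRel.TminusT' ⟨i, h⟩)
  rw [map_sub, AlgHom.commutes] at this
  unfold TgN TpN
  rw [dif_pos h, dif_pos h]
  rw [eq_sub_iff_add_eq, ← eq_sub_iff_add_eq'] at *
  exact this.symm

lemma commTT {i j : ℕ} (hij : i + 1 < j ∨ j + 1 < i) : T i * T j = T j * T i := by
  unfold TgN
  by_cases h1 : i < k - 1
  · by_cases h2 : j < k - 1
    · rw [dif_pos h1, dif_pos h2]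
      simpa only [dgen, map_mul] using mk_rel (k := k) (DRel.Tcomm ⟨i, h1⟩ ⟨j, h2⟩ hij)
    · rw [dif_neg h2, one_mul, mul_one]
  · rw [dif_neg h1, one_mul, mul_one]

lemma braidT {i : ℕ} (h : i + 1 < k - 1) :
    T i * T (i+1) * T i = T (i+1) * T i * T (i+1) := by
  have h' : i < k - 1 := by omega
  unfold TgN
  rw [dif_pos h, dif_pos h']
  simpa only [dgen, map_mul] using mk_rel (k := k) (DRel.braid ⟨i, h'⟩ ⟨i+1, h⟩ rfl)

lemma TpXTp (i : ℕ) (h : i < k - 1) : T' i * X i * T' i = X (i+1) := by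
  have hx : i < k := by omega
  have hx1 : i + 1 < k := by omega
  unfold TpN XgN
  rw [dif_pos h, dif_pos hx, dif_pos hx1]
  simpa only [dgen, map_mul] using
    mk_rel (k := k) (DRel.TXT ⟨i, h⟩ ⟨i, hx⟩ ⟨i+1, hx1⟩ rfl rfl)

lemma commTX {i j : ℕ} (h1 : j ≠ i) (h2 : j ≠ i + 1) : T i * X j = X j * T i := by
  unfold TgN XgN
  by_cases hi : i < k - 1
  · by_cases hj : j < k
    · rw [dif_pos hi, dif_pos hj]
      simpa only [dgen, map_mul] using mk_rel (k := k) (DRel.TX ⟨i, hi⟩ ⟨j, hj⟩ h1 h2)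
    · rw [dif_neg hj, one_mul, mul_one]
  · rw [dif_neg hi, one_mul, mul_one]

lemma commXX (a b : ℕ) : X a * X b = X b * X a := by
  unfold XgN
  by_cases ha : a < k
  · by_cases hb : b < k
    · rw [dif_pos ha, dif_pos hb]
      simpa only [dgen, map_mul] using mk_rel (k := k) (DRel.XX ⟨a, ha⟩ ⟨b, hb⟩)
    · rw [dif_neg hb, one_mul, mul_one]
  · rw [dif_neg ha, one_mul, mul_one]

lemma TYT (i : ℕ) (h : i < k - 1) : T i * Y i * T i = Y (i+1) := by
  have hx : i < k := by omega
  have hx1 : i + 1 < k := by omega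
  unfold TgN YgN
  rw [dif_pos h, dif_pos hx, dif_pos hx1]
  simpa only [dgen, map_mul] using
    mk_rel (k := k) (DRel.TYT ⟨i, h⟩ ⟨i, hx⟩ ⟨i+1, hx1⟩ rfl rfl)

lemma commTY {i j : ℕ} (h1 : j ≠ i) (h2 : j ≠ i + 1) : T i * Y j = Y j * T i := by
  unfold TgN YgN
  by_cases hi : i < k - 1
  · by_cases hj : j < k
    · rw [dif_pos hi, dif_pos hj]
      simpa only [dgen, map_mul] using mk_rel (k := k) (DRel.TY ⟨i, hi⟩ ⟨j, hj⟩ h1 h2)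
    · rw [dif_neg hj, one_mul, mul_one]
  · rw [dif_neg hi, one_mul, mul_one]

lemma commYY (a b : ℕ) : Y a * Y b = Y b * Y a := by
  unfold YgN
  by_cases ha : a < k
  · by_cases hb : b < k
    · rw [dif_pos ha, dif_pos hb]
      simpa only [dgen, map_mul] using mk_rel (k := k) (DRel.YY ⟨a, ha⟩ ⟨b, hb⟩)
    · rw [dif_neg hb, one_mul, mul_one]
  · rw [dif_neg ha, one_mul, mul_one]

lemma crossRel (hk : 2 ≤ k) : Y 0 * T 0 * X 0 = X 1 * Y 0 * T 0 := by
  have h0 : (0:ℕ) < k - 1 := by omega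
  have hx0 : (0:ℕ) < k := by omega
  have hx1 : (1:ℕ) < k := by omega
  unfold TgN XgN YgN
  simp only [dif_pos h0, dif_pos hx0, dif_pos hx1]
  simpa only [dgen, map_mul] using
    mk_rel (k := k) (DRel.cross ⟨0, h0⟩ ⟨0, hx0⟩ ⟨1, hx1⟩ rfl rfl rfl)

lemma detRel (hk : 2 ≤ k) :
    Y 0 * incF (XgN k) 0 k = qq * incF (XgN k) 0 k * Y 0 := by
  have hx0 : (0:ℕ) < k := by omega
  have key := mk_rel (k := k) (DRel.det ⟨0, hx0⟩ rfl)
  rw [map_mul, map_mul, map_mul, map_list_prod, List.map_map, AlgHom.commutes] at key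
  have hlist : (List.map ((RingQuot.mkAlgHom K2 (DRel k)) ∘ fun j => FreeAlgebra.ι K2 (DGen.X j))
      (List.finRange k)).prod = incF (XgN k) 0 k := by
    unfold incF
    rw [show List.range' 0 k = List.range k from (List.range_eq_range' (n := k)).symm,
      ← (show (List.finRange k).map (fun i : Fin k => (i : ℕ)) = List.range k from
        List.ext_getElem (by simp) (by simp)), List.map_map]
    congr 1
    apply List.map_congr_left
    intro j _
    simp only [Function.comp_apply]
    unfold XgN
    rw [dif_pos j.isLt]
    rfl
  rw [hlist] at key
  unfold YgN
  simp only [dif_pos hx0]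
  exact key

end
variable {M : Type*} [Monoid M]

lemma cancelA {a b : M} (h : a * b = 1) (z : M) : a * (b * z) = z := by
  rw [← mul_assoc, h, one_mul]

lemma comm_of_inv {a c b : M} (h1 : a * c = 1) (h2 : c * a = 1) (h3 : c * b = b * c) :
    a * b = b * a := by
  calc a * b = a * b * (c * a) := by rw [h2, mul_one]
    _ = a * (b * c) * a := by simp only [mul_assoc]
    _ = a * (c * b) * a := by rw [h3]
    _ = (a * c) * (b * a) := by simp only [mul_assoc]
    _ = b * a := by rw [h1, one_mul]

section
variable {k : ℕ}

local notation "T" => TgN k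
local notation "T'" => TpN k
local notation "X" => XgN k
local notation "X'" => XpN k
local notation "Y" => YgN k
local notation "hh" => algebraMap K2 (Hk k) hvar
local notation "qq" => algebraMap K2 (Hk k) qvar

lemma commTpX {i j : ℕ} (h1 : j ≠ i) (h2 : j ≠ i + 1) : T' i * X j = X j * T' i :=
  comm_of_inv (Tp_mul_T i) (T_mul_Tp i) (commTX h1 h2)

lemma commTpY {i j : ℕ} (h1 : j ≠ i) (h2 : j ≠ i + 1) : T' i * Y j = Y j * T' i :=
  comm_of_inv (Tp_mul_T i) (T_mul_Tp i) (commTY h1 h2)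

lemma commTTp {i j : ℕ} (hij : i + 1 < j ∨ j + 1 < i) : T i * T' j = T' j * T i :=
  (comm_of_inv (Tp_mul_T j) (T_mul_Tp j) (commTT (Or.symm (by tauto)))).symm

lemma commTpTp {i j : ℕ} (hij : i + 1 < j ∨ j + 1 < i) : T' i * T' j = T' j * T' i :=
  comm_of_inv (Tp_mul_T i) (T_mul_Tp i) (commTTp hij)

lemma braidTp {i : ℕ} (h : i + 1 < k - 1) :
    T' i * T' (i+1) * T' i = T' (i+1) * T' i * T' (i+1) := by
  have hb := braidT h
  have h1 : (T' i * T' (i+1) * T' i) * (T i * T (i+1) * T i) = 1 := by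
    simp only [mul_assoc]
    rw [cancelA (Tp_mul_T (k := k) i), cancelA (Tp_mul_T (k := k) (i+1)), Tp_mul_T i]
  have h2 : (T (i+1) * T i * T (i+1)) * (T' (i+1) * T' i * T' (i+1)) = 1 := by
    simp only [mul_assoc]
    rw [cancelA (T_mul_Tp (k := k) (i+1)), cancelA (T_mul_Tp (k := k) i), T_mul_Tp (i+1)]
  calc T' i * T' (i+1) * T' i
      = (T' i * T' (i+1) * T' i) * ((T (i+1) * T i * T (i+1)) * (T' (i+1) * T' i * T' (i+1))) := by
        rw [h2, mul_one]
    _ = ((T' i * T' (i+1) * T' i) * (T i * T (i+1) * T i)) * (T' (i+1) * T' i * T' (i+1)) := by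
        rw [← hb]; simp only [mul_assoc]
    _ = T' (i+1) * T' i * T' (i+1) := by rw [h1, one_mul]

lemma Tsq (i : ℕ) (h : i < k - 1) : T i * T i = 1 + hh * T i := by
  have e := T_mul_Tp (k := k) i
  rw [Tp_eq i h, mul_sub, sub_eq_iff_eq_add, ← Algebra.commutes] at e
  rw [e, add_comm]

lemma Tpsq (i : ℕ) (h : i < k - 1) : T' i * T' i = 1 - hh * T' i := by
  have e := Tp_mul_T (k := k) i
  have e2 : T i = T' i + hh := by rw [Tp_eq i h]; abel
  rw [e2, mul_add, ← Algebra.commutes] at e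
  rw [eq_sub_iff_add_eq, e]

lemma X_Tp (i : ℕ) (h : i < k - 1) : X i * T' i = T i * X (i+1) := by
  rw [← TpXTp i h]
  simp only [mul_assoc]
  rw [cancelA (T_mul_Tp (k := k) i)]

lemma Tp_X (i : ℕ) (h : i < k - 1) : T' i * X i = X (i+1) * T i := by
  rw [← TpXTp i h]
  simp only [mul_assoc]
  rw [Tp_mul_T (k := k) i, mul_one]

lemma TXT (i : ℕ) (h : i < k - 1) : T i * X (i+1) * T i = X i := by
  rw [← TpXTp i h]
  simp only [mul_assoc]
  rw [Tp_mul_T (k := k) i, mul_one, cancelA (T_mul_Tp (k := k) i)]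

lemma Y_T (i : ℕ) (h : i < k - 1) : Y i * T i = T' i * Y (i+1) := by
  rw [← TYT i h]
  simp only [mul_assoc]
  rw [cancelA (Tp_mul_T (k := k) i)]

lemma T_Y (i : ℕ) (h : i < k - 1) : T i * Y i = Y (i+1) * T' i := by
  rw [← TYT i h]
  simp only [mul_assoc]
  rw [T_mul_Tp (k := k) i, mul_one]

end
variable {M : Type*} [Monoid M]

lemma flat2A {u v p q : M} (h : u * v = p * q) (z : M) : u * (v * z) = p * (q * z) := by
  rw [← mul_assoc, h, mul_assoc]

lemma flat3A {u v w p q r : M} (h : u * v * w = p * q * r) (z : M) :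
    u * (v * (w * z)) = p * (q * (r * z)) := by
  rw [← mul_assoc, ← mul_assoc, h, mul_assoc, mul_assoc]

section
variable {k : ℕ}

local notation "T" => TgN k
local notation "T'" => TpN k
local notation "X" => XgN k
local notation "X'" => XpN k
local notation "Y" => YgN k
local notation "hh" => algebraMap K2 (Hk k) hvar
local notation "qq" => algebraMap K2 (Hk k) qvar

lemma bshiftA {i : ℕ} (h : i + 1 < k - 1) (z : Hk k) :
    T i * (T (i+1) * (T' i * z)) = T' (i+1) * (T i * (T (i+1) * z)) := by
  have hb := braidT h
  conv_lhs => rw [← cancelA (Tp_mul_T (k := k) (i+1)) (T i * (T (i+1) * (T' i * z)))]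
  rw [← triA hb, cancelA (T_mul_Tp (k := k) i)]

lemma genCross (i : ℕ) (h : i < k - 1) :
    Y i * T i * X i = X (i+1) * Y i * T i := by
  induction i with
  | zero => exact crossRel (by omega)
  | succ i ih =>
    have hik : i < k - 1 := by omega
    have ih' := ih hik
    rw [← TYT i hik, ← TpXTp i hik, ← TpXTp (i+1) h]
    simp only [mul_assoc]
    rw [bshiftA h, swA ((commTpY (k := k) (i := i+1) (j := i) (by omega) (by omega)).symm),
      swA (commTX (k := k) (i := i+1) (j := i) (by omega) (by omega)),
      flat3A ih',
      flat2A (Tp_X (i+1) h),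
      swA (commTX (k := k) (i := i) (j := i+1+1) (by omega) (by omega)),
      swA (commTY (k := k) (i := i+1) (j := i) (by omega) (by omega)),
      ← triA (braidT h), T_mul_Tp (k := k) i, mul_one,
      flat2A (Tp_X (i+1) h), cancelA (T_mul_Tp (k := k) (i+1))]

lemma C2 (b : ℕ) (h : b < k - 1) :
    Y (b+1) * X b = X b * Y (b+1) - hh * (X b * (Y b * T b)) := by
  calc Y (b+1) * X b
      = T b * (Y b * (T b * X b)) := by rw [← TYT b h]; simp only [mul_assoc]
    _ = T b * (X (b+1) * (Y b * T b)) := by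
        rw [show Y b * (T b * X b) = X (b+1) * (Y b * T b) from by
          simpa only [mul_assoc] using genCross b h]
    _ = X b * (T' b * (Y b * T b)) := by
        rw [← mul_assoc, ← mul_assoc, ← X_Tp b h]; simp only [mul_assoc]
    _ = X b * ((T' b * T' b) * Y (b+1)) := by
        rw [Y_T b h]; simp only [mul_assoc]
    _ = X b * Y (b+1) - hh * (X b * (Y b * T b)) := by
        rw [Tpsq b h, sub_mul, one_mul, mul_sub, mul_assoc, ← Y_T b h,
          swA ((Algebra.commutes hvar (X b)).symm)]
end
section
variable {k : ℕ}

local notation "T" => TgN k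
local notation "T'" => TpN k
local notation "X" => XgN k
local notation "X'" => XpN k
local notation "Y" => YgN k
local notation "hh" => algebraMap K2 (Hk k) hvar
local notation "qq" => algebraMap K2 (Hk k) qvar

lemma Dlem (a m : ℕ) (h : a + m + 1 < k) :
    Y a * X (a+m+1) = X (a+m+1) * Y a - hh * (Y a * (X a * palF (TpN k) a (a+m))) := by
  induction m with
  | zero =>
    simp only [Nat.add_zero, palF_base]
    have ha : a < k - 1 := by omega
    have hYTp : Y a * T' a = T' a * Y (a+1) - hh * Y a := by
      calc Y a * T' a = Y a * (T a - hh) := by rw [← Tp_eq a ha]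
        _ = Y a * T a - hh * Y a := by rw [mul_sub, ← Algebra.commutes]
        _ = T' a * Y (a+1) - hh * Y a := by rw [Y_T a ha]
    calc Y a * X (a+1)
        = (Y a * T' a) * (X a * T' a) := by
          rw [← TpXTp a ha]; simp only [mul_assoc]
      _ = (T' a * Y (a+1) - hh * Y a) * (X a * T' a) := by rw [hYTp]
      _ = T' a * ((Y (a+1) * X a) * T' a) - hh * (Y a * (X a * T' a)) := by
          rw [sub_mul]; simp only [mul_assoc]
      _ = T' a * ((X a * Y (a+1) - hh * (X a * (Y a * T a))) * T' a)
            - hh * (Y a * (X a * T' a)) := by rw [C2 a ha]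
      _ = T' a * (X a * (Y (a+1) * T' a)) - hh * (T' a * (X a * (Y a * (T a * T' a))))
            - hh * (Y a * (X a * T' a)) := by
          rw [sub_mul, mul_sub]
          simp only [mul_assoc]
          rw [swA ((Algebra.commutes hvar (T' a)).symm)]
      _ = X (a+1) * (T a * (T a * Y a)) - hh * (X (a+1) * (T a * Y a))
            - hh * (Y a * (X a * T' a)) := by
          rw [T_mul_Tp (k := k) a, mul_one, ← T_Y a ha, flat2A (Tp_X a ha),
            flat2A (Tp_X a ha)]
      _ = X (a+1) * Y a + hh * (X (a+1) * (T a * Y a)) - hh * (X (a+1) * (T a * Y a))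
            - hh * (Y a * (X a * T' a)) := by
          rw [← mul_assoc (T a) (T a), Tsq a ha, add_mul, one_mul, mul_add]
          simp only [mul_assoc]
          rw [swA ((Algebra.commutes hvar (X (a+1))).symm)]
      _ = X (a+1) * Y a - hh * (Y a * (X a * T' a)) := by abel
  | succ m ih =>
    show Y a * X (a+m+1+1) = X (a+m+1+1) * Y a - hh * (Y a * (X a * palF (TpN k) a (a+m+1)))
    have hc : a + m + 1 < k - 1 := by omega
    have ih' := ih (by omega)
    have hTpY : T' (a+m+1) * Y a = Y a * T' (a+m+1) :=
      commTpY (k := k) (i := a+m+1) (j := a) (by omega) (by omega)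
    have hTpX : T' (a+m+1) * X a = X a * T' (a+m+1) :=
      commTpX (k := k) (i := a+m+1) (j := a) (by omega) (by omega)
    rw [palF_rec (TpN k) a (a+m) (by omega)]
    calc Y a * X (a+m+1+1)
        = T' (a+m+1) * ((Y a * X (a+m+1)) * T' (a+m+1)) := by
          rw [← TpXTp (a+m+1) hc]
          simp only [mul_assoc]
          rw [swA hTpY.symm, ← mul_assoc (Y a)]
      _ = T' (a+m+1) * ((X (a+m+1) * Y a - hh * (Y a * (X a * palF (TpN k) a (a+m))))
            * T' (a+m+1)) := by rw [ih']
      _ = T' (a+m+1) * (X (a+m+1) * (Y a * T' (a+m+1)))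
            - hh * (T' (a+m+1) * (Y a * (X a * (palF (TpN k) a (a+m) * T' (a+m+1))))) := by
          rw [sub_mul, mul_sub]
          simp only [mul_assoc]
          rw [swA ((Algebra.commutes hvar (T' (a+m+1))).symm)]
      _ = X (a+m+1+1) * Y a
            - hh * (Y a * (X a * (T' (a+m+1) * (palF (TpN k) a (a+m) * T' (a+m+1))))) := by
          rw [← hTpY, ← mul_assoc, ← mul_assoc, TpXTp (a+m+1) hc, swA hTpY, swA hTpX]
      _ = X (a+m+1+1) * Y a
            - hh * (Y a * (X a * (T' (a+m+1) * palF (TpN k) a (a+m) * T' (a+m+1)))) := by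
          simp only [mul_assoc]

lemma chainX (c m : ℕ) (h : c + m < k) :
    X c * incF (TpN k) c m = incF (TgN k) c m * X (c + m) := by
  induction m with
  | zero => simp
  | succ m ih =>
    show X c * incF (TpN k) c (m+1) = incF (TgN k) c (m+1) * X (c+m+1)
    rw [incF_succ_right, incF_succ_right, ← mul_assoc, ih (by omega), mul_assoc,
      X_Tp (c+m) (by omega), ← mul_assoc]
end
section
variable {k : ℕ}

local notation "T" => TgN k
local notation "T'" => TpN k
local notation "X" => XgN k
local notation "X'" => XpN k
local notation "Y" => YgN k
local notation "hh" => algebraMap K2 (Hk k) hvar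
local notation "qq" => algebraMap K2 (Hk k) qvar

lemma Vlem (m : ℕ) (h : m < k) :
    incF (XgN k) 1 m * Y 0 =
      Y 0 * (incF (TgN k) 0 m * (decF (TgN k) 0 m * incF (XgN k) 1 m)) := by
  induction m with
  | zero => simp
  | succ m ih =>
    have hm : m < k - 1 := by omega
    have hcomm : X (m+1) * incF (XgN k) 1 m = incF (XgN k) 1 m * X (m+1) :=
      commute_incF _ _ _ _ (fun i _ _ => commXX _ _)
    have cI : X (m+1) * incF (TgN k) 0 m = incF (TgN k) 0 m * X (m+1) :=
      commute_incF _ _ _ _ (fun i h1 h2 =>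
        (commTX (k := k) (i := i) (j := m+1) (by omega) (by omega)).symm)
    have cD : X (m+1) * decF (TgN k) 0 m = decF (TgN k) 0 m * X (m+1) :=
      commute_decF _ _ _ _ (fun i h1 h2 =>
        (commTX (k := k) (i := i) (j := m+1) (by omega) (by omega)).symm)
    have hD := Dlem (k := k) 0 m (by omega)
    simp only [Nat.zero_add] at hD
    have hD' : X (m+1) * Y 0 = Y 0 * X (m+1) + hh * (Y 0 * (X 0 * palF (TpN k) 0 m)) :=
      sub_eq_iff_eq_add.mp hD.symm
    have hpal : palF (TpN k) 0 m = incF (TpN k) 0 (m+1) * decF (TpN k) 0 m := by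
      have hb : ∀ i, 0 ≤ i → i + 1 ≤ 0 + m →
          T' i * T' (i+1) * T' i = T' (i+1) * T' i * T' (i+1) :=
        fun i _ h2 => braidTp (by omega)
      have hco : ∀ i j, 0 ≤ i → i + 1 < j → j ≤ 0 + m → T' i * T' j = T' j * T' i :=
        fun i j _ h2 _ => commTpTp (by omega)
      have e := rev_eq_pal (TpN k) 0 m hb hco
      rw [Nat.zero_add] at e
      exact e.symm
    have hchain := chainX (k := k) 0 (m+1) (by omega)
    simp only [Nat.zero_add] at hchain
    have hcan : ∀ z : Hk k, decF (TpN k) 0 m * (incF (TgN k) 0 m * z) = z :=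
      fun z => cancelA (decF_mul_incF (TgN k) (TpN k) 0 m (fun i _ _ => Tp_mul_T i)) z
    rw [incF_succ_right (XgN k) 1 m, show 1 + m = m + 1 from by omega]
    calc incF (XgN k) 1 m * X (m+1) * Y 0
        = X (m+1) * (incF (XgN k) 1 m * Y 0) := by
          rw [← hcomm]; simp only [mul_assoc]
      _ = (X (m+1) * Y 0) * (incF (TgN k) 0 m * (decF (TgN k) 0 m * incF (XgN k) 1 m)) := by
          rw [ih (by omega)]; simp only [mul_assoc]
      _ = Y 0 * (X (m+1) * (incF (TgN k) 0 m * (decF (TgN k) 0 m * incF (XgN k) 1 m)))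
          + hh * (Y 0 * (X 0 * (palF (TpN k) 0 m *
              (incF (TgN k) 0 m * (decF (TgN k) 0 m * incF (XgN k) 1 m))))) := by
          rw [hD', add_mul]; simp only [mul_assoc]
      _ = Y 0 * (incF (TgN k) 0 m * (decF (TgN k) 0 m * (incF (XgN k) 1 m * X (m+1))))
          + hh * (Y 0 * (incF (TgN k) 0 (m+1) *
              (decF (TgN k) 0 m * (incF (XgN k) 1 m * X (m+1))))) := by
          rw [swA cI, swA cD, hcomm, hpal]
          simp only [mul_assoc]
          rw [hcan, flat2A hchain, swA cD, hcomm]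
      _ = Y 0 * (incF (TgN k) 0 (m+1) * (decF (TgN k) 0 (m+1) * (incF (XgN k) 1 m * X (m+1)))) := by
          have hTsq : ∀ z : Hk k, T m * (T m * z) = z + hh * (T m * z) := fun z => by
            rw [← mul_assoc, Tsq m hm, add_mul, one_mul, mul_assoc]
          rw [incF_succ_right (TgN k) 0 m, decF_succ_left (TgN k) 0 m, Nat.zero_add]
          simp only [mul_assoc]
          rw [hTsq, mul_add, mul_add,
            swA ((Algebra.commutes hvar (incF (TgN k) 0 m)).symm),
            swA ((Algebra.commutes hvar (Y 0)).symm)]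
end
section
variable {k : ℕ}

local notation "T" => TgN k
local notation "T'" => TpN k
local notation "X" => XgN k
local notation "X'" => XpN k
local notation "Y" => YgN k
local notation "hh" => algebraMap K2 (Hk k) hvar
local notation "qq" => algebraMap K2 (Hk k) qvar

lemma palT_eq (lo hi : ℕ) : palT k lo hi = palF (TgN k) lo hi := rfl

lemma Lbase (hk : 2 ≤ k) :
    Y 0 * X 0 = qq * (X 0 * Y 0) * (incF (TgN k) 0 (k-1) * decF (TgN k) 0 (k-1)) := by
  obtain ⟨n, rfl⟩ : ∃ n, k = n + 1 := ⟨k - 1, by omega⟩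
  simp only [Nat.add_sub_cancel]
  have hdet := detRel (k := n+1) hk
  rw [incF_succ_left] at hdet
  simp only [Nat.zero_add] at hdet
  simp only [mul_assoc] at hdet
  rw [Vlem (k := n+1) n (by omega)] at hdet
  have hP : incF (XgN (n+1)) 1 n * decF (XpN (n+1)) 1 n = 1 :=
    incF_mul_decF _ _ _ _ (fun i _ _ => X_mul_Xp i)
  calc YgN (n+1) 0 * XgN (n+1) 0
      = YgN (n+1) 0 * (XgN (n+1) 0 * (incF (XgN (n+1)) 1 n * decF (XpN (n+1)) 1 n)) := by
        rw [hP, mul_one]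
    _ = (YgN (n+1) 0 * (XgN (n+1) 0 * incF (XgN (n+1)) 1 n)) * decF (XpN (n+1)) 1 n := by
        simp only [mul_assoc]
    _ = (algebraMap K2 (Hk (n+1)) qvar * (XgN (n+1) 0 * (YgN (n+1) 0 * (incF (TgN (n+1)) 0 n
          * (decF (TgN (n+1)) 0 n * incF (XgN (n+1)) 1 n))))) * decF (XpN (n+1)) 1 n := by
        rw [hdet]
    _ = algebraMap K2 (Hk (n+1)) qvar * (XgN (n+1) 0 * YgN (n+1) 0)
          * (incF (TgN (n+1)) 0 n * decF (TgN (n+1)) 0 n) := by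
        simp only [mul_assoc]
        rw [hP, mul_one]

lemma Zlem (a : ℕ) (h : a < k - 1) :
    T a * (X a * Y a) * T a = X (a+1) * Y (a+1) + hh * (X a * Y a * T a) := by
  have e : X (a+1) * Y (a+1) = T' a * (X a * Y a) * T a := by
    rw [← TpXTp a h, ← TYT a h]
    simp only [mul_assoc]
    rw [cancelA (Tp_mul_T (k := k) a)]
  rw [e, Tp_eq a h, sub_mul, sub_mul]
  simp only [mul_assoc]
  abel

lemma Lmain (hk : 2 ≤ k) (a : ℕ) (ha : a < k) :
    Y a * X a = qq * (X a * Y a + hh * ∑ i ∈ Finset.range a, X i * Y i * palF (TgN k) i (a-1))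
      * (incF (TgN k) a (k-1-a) * decF (TgN k) a (k-1-a)) := by
  induction a with
  | zero =>
    simp only [Finset.range_zero, Finset.sum_empty, mul_zero, add_zero, Nat.sub_zero]
    exact Lbase hk
  | succ a ih =>
    have hak : a < k - 1 := by omega
    have ih' := ih (by omega)
    have e0 : Y (a+1) * X (a+1) = T a * ((Y a * X a) * T' a) := by
      rw [← TYT a hak, ← TpXTp a hak]
      simp only [mul_assoc]
      rw [cancelA (T_mul_Tp (k := k) a)]
    have hA : T a * ((X a * Y a + hh * ∑ i ∈ Finset.range a, X i * Y i * palF (TgN k) i (a-1))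
          * T a)
        = X (a+1) * Y (a+1) + hh * ∑ i ∈ Finset.range (a+1), X i * Y i * palF (TgN k) i a := by
      rw [add_mul, mul_add, ← mul_assoc (T a) (X a * Y a) (T a), Zlem a hak,
        Finset.sum_range_succ, palF_base]
      have hS : T a * ((hh * ∑ i ∈ Finset.range a, X i * Y i * palF (TgN k) i (a-1)) * T a)
          = hh * ∑ i ∈ Finset.range a, X i * Y i * palF (TgN k) i a := by
        rw [mul_assoc (algebraMap K2 (Hk k) hvar), swA (Algebra.commutes hvar (T a)).symm]
        congr 1
        rw [Finset.sum_mul, Finset.mul_sum]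
        apply Finset.sum_congr rfl
        intro i hi
        have hia : i < a := Finset.mem_range.mp hi
        have hpal : palF (TgN k) i a = T a * (palF (TgN k) i (a-1) * T a) := by
          have e := palF_rec (TgN k) i (a-1) (by omega)
          rw [show a - 1 + 1 = a from by omega] at e
          rw [e]; simp only [mul_assoc]
        rw [hpal]
        simp only [mul_assoc]
        rw [swA (commTX (k := k) (i := a) (j := i) (by omega) (by omega)),
          swA (commTY (k := k) (i := a) (j := i) (by omega) (by omega))]
      rw [hS, mul_add]
      abel
    rw [e0, ih', show k - 1 - a = (k - 1 - (a+1)) + 1 from by omega,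
      incF_succ_left (TgN k) a (k-1-(a+1)), decF_succ_right (TgN k) a (k-1-(a+1))]
    simp only [Nat.add_sub_cancel, mul_assoc]
    rw [T_mul_Tp (k := k) a, mul_one, swA ((Algebra.commutes qvar (T a)).symm)]
    simp only [mul_assoc] at hA
    congr 1
    rw [← hA]
    simp only [mul_assoc]

lemma IncDec_sum (a n : ℕ) (h : a + n ≤ k - 1) :
    incF (TgN k) a n * decF (TgN k) a n
      = 1 + hh * ∑ j ∈ Finset.range n, palF (TgN k) a (a+j) := by
  induction n with
  | zero => simp
  | succ n ih =>
    have ih' := ih (by omega)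
    have hrev : incF (TgN k) a (n+1) * decF (TgN k) a n = palF (TgN k) a (a+n) :=
      rev_eq_pal (TgN k) a n (fun i h1 h2 => braidT (by omega))
        (fun i j h1 h2 h3 => commTT (by omega))
    rw [incF_succ_right, decF_succ_left]
    calc (incF (TgN k) a n * T (a+n)) * (T (a+n) * decF (TgN k) a n)
        = incF (TgN k) a n * ((T (a+n) * T (a+n)) * decF (TgN k) a n) := by
          simp only [mul_assoc]
      _ = incF (TgN k) a n * decF (TgN k) a n + hh * (incF (TgN k) a (n+1) * decF (TgN k) a n) := by
          rw [Tsq (a+n) (by omega), add_mul, one_mul, mul_add]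
          simp only [mul_assoc]
          rw [swA ((Algebra.commutes hvar (incF (TgN k) a n)).symm),
            incF_succ_right (TgN k) a n]
          simp only [mul_assoc]
      _ = 1 + hh * ∑ j ∈ Finset.range (n+1), palF (TgN k) a (a+j) := by
          rw [ih', hrev, Finset.sum_range_succ, mul_add]
          abel
end
end DahaProof
/-- In `H_k` (`k ≥ 2`), for every `1 ≤ a ≤ k` (paper index; below `a : ℕ` with `a < k` is the
0-based index, paper index `a + 1`):
`Y_aX_a = q·(X_aY_a + h·∑_{i=1}^{a−1} X_iY_i·T_{(i,a)})·(1 + h·∑_{p=a}^{k−1} T_{(a,p+1)})`,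
where `T_{(c,d)} = T_{d−1}⋯T_{c+1}T_cT_{c+1}⋯T_{d−1}` and empty sums are `0`.
In the 0-based encoding, the paper term for `i = ι + 1 ≤ a − 1` is
`X_ιY_ι·palT ι (a−1)` and the paper term for `p = (a+1) + j ∈ {a, …, k−1}` (with
`j ∈ {0, …, k−2−a}` 0-based, i.e. `j < k − 1 − a`) is `palT a (a+j)`. -/
theorem statement7 (k : ℕ) (hk : 2 ≤ k) (a : ℕ) (ha : a < k) :
    YgN k a * XgN k a =
      algebraMap K2 (Hk k) qvar *
        (XgN k a * YgN k a +
          algebraMap K2 (Hk k) hvar *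
            ∑ i ∈ Finset.range a, XgN k i * YgN k i * palT k i (a - 1)) *
        (1 + algebraMap K2 (Hk k) hvar *
          ∑ j ∈ Finset.range (k - 1 - a), palT k a (a + j)) := by
  have hmain := DahaProof.Lmain (k := k) hk a ha
  rw [DahaProof.IncDec_sum (k := k) a (k - 1 - a) (by omega)] at hmain
  simpa only [DahaProof.palT_eq] using hmain

end
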